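/- Let 1 ≤ n ≤ 4. For every nondegenerate simplex with vertices x⁽¹⁾,…,x⁽ⁿ⁺¹⁾ in the closed unit ball B_n of ℝⁿ, with basic Lagrange polynomials λ₁,…,λ_{n+1}, and every regular simplex with vertices s⁽¹⁾,…,s⁽ⁿ⁺¹⁾ inscribed into B_n, with basic Lagrange polynomials λ′₁,…,λ′_{n+1}, one has max_{x∈B_n} Σ_{j=1}^{n+1} |λⱼ(x)| ≥ max_{x∈B_n} Σ_{j=1}^{n+1} |λ′ⱼ(x)|; hence the minimal norm θ_n(B_n) of an interpolation projector with nodes in B_n is attained at the vertices of a regular inscribed simplex. -/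

import Mathlib

open Finset RealInnerProductSpace

section Helpers

/-- Uniqueness of the Lagrange basis: an affine function with the Kronecker-delta
values on an affine basis coincides with the barycentric coordinate. -/
lemma eq_coord {n : ℕ} (b : AffineBasis (Fin (n+1)) ℝ (EuclideanSpace ℝ (Fin n)))
    (f : EuclideanSpace ℝ (Fin n) →ᵃ[ℝ] ℝ) (j : Fin (n+1))
    (hf : ∀ i, f (b i) = if i = j then 1 else 0) (q : EuclideanSpace ℝ (Fin n)) :
    f q = b.coord j q := by
  conv_lhs => rw [← b.affineCombination_coord_eq_self q,
    Finset.map_affineCombination _ _ _ (b.sum_coord_apply_eq_one q),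
    Finset.univ.affineCombination_eq_linear_combination _ _ (b.sum_coord_apply_eq_one q)]
  simp [Function.comp, hf, mul_ite, Finset.sum_ite_eq']

lemma nat_case_ineq (n k : ℕ) (hn1 : 1 ≤ n) (hn4 : n ≤ 4) (hk : k ≤ n + 1) :
    n * k * (n + 1 - k) ≤ (n - 1 + k)^2 := by
  interval_cases n <;> interval_cases k <;> decide

lemma key_ineq {n : ℕ} (hn1 : 1 ≤ n) (hn4 : n ≤ 4) (t : Fin (n+1) → ℝ)
    (ht0 : ∑ j, t j = 0) (ht2 : ∑ j, (t j)^2 ≤ (n+1)/n) :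
    ∑ j, |1 + n * t j| ≤ 3*n - 1 := by
  classical
  have hnR : (0:ℝ) < n := by exact_mod_cast hn1
  set A : Finset (Fin (n+1)) := univ.filter (fun j => 1 + (n:ℝ) * t j < 0) with hA
  set k : ℕ := A.card with hk
  set S : ℝ := ∑ j ∈ A, t j with hS
  have hkle : k ≤ n + 1 := by
    calc k ≤ Fintype.card (Fin (n+1)) := card_le_univ A
    _ = n + 1 := by simp
  have habs : ∑ j, |1 + (n:ℝ) * t j|
      = (∑ j, (1 + (n:ℝ) * t j)) - 2 * ∑ j ∈ A, (1 + (n:ℝ) * t j) := by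
    rw [← Finset.sum_filter_add_sum_filter_not univ (fun j => 1 + (n:ℝ) * t j < 0)
      (fun j => |1 + (n:ℝ) * t j|), ← hA]
    rw [← Finset.sum_filter_add_sum_filter_not univ (fun j => 1 + (n:ℝ) * t j < 0)
      (fun j => (1 + (n:ℝ) * t j)), ← hA]
    have h1 : ∑ j ∈ A, |1 + (n:ℝ) * t j| = ∑ j ∈ A, -(1 + (n:ℝ) * t j) := by
      apply Finset.sum_congr rfl
      intro j hj
      rw [hA, mem_filter] at hj
      rw [abs_of_neg hj.2]
    have h2 : ∑ j ∈ univ.filter (fun j => ¬ (1 + (n:ℝ) * t j < 0)), |1 + (n:ℝ) * t j|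
        = ∑ j ∈ univ.filter (fun j => ¬ (1 + (n:ℝ) * t j < 0)), (1 + (n:ℝ) * t j) := by
      apply Finset.sum_congr rfl
      intro j hj
      rw [mem_filter] at hj
      rw [abs_of_nonneg (not_lt.mp hj.2)]
    rw [h1, h2, Finset.sum_neg_distrib]
    ring
  have hsum1 : ∑ j, (1 + (n:ℝ) * t j) = n + 1 := by
    rw [Finset.sum_add_distrib, ← Finset.mul_sum, ht0]
    simp
  have hsumA : ∑ j ∈ A, (1 + (n:ℝ) * t j) = k + n * S := by
    rw [Finset.sum_add_distrib, ← Finset.mul_sum, ← hS]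
    simp [hk]
  rw [habs, hsum1, hsumA]
  have hk0 : (0:ℝ) ≤ (k:ℝ) := Nat.cast_nonneg k
  have hn1R : (1:ℝ) ≤ n := by exact_mod_cast hn1
  have hkR : (0:ℝ) ≤ (n:ℝ) - 1 + k := by linarith
  set u : Fin (n+1) → ℝ := fun j => (if j ∈ A then (1:ℝ) else 0) - k/(n+1) with hu
  have hSu : S = ∑ j, u j * t j := by
    simp only [hu, sub_mul, ite_mul, one_mul, zero_mul]
    rw [Finset.sum_sub_distrib, ← Finset.mul_sum, ht0, Finset.sum_ite_mem, univ_inter, ← hS]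
    ring
  have hsumu2 : ∑ j, (u j)^2 = k * (n+1-k)/(n+1) := by
    have he : ∀ j, (u j)^2
        = (if j ∈ A then (1:ℝ) else 0) * (1 - 2*((k:ℝ)/(n+1))) + ((k:ℝ)/(n+1))^2 := by
      intro j
      by_cases h : j ∈ A <;> simp [hu, h] <;> ring
    rw [Finset.sum_congr rfl (fun j _ => he j), Finset.sum_add_distrib, ← Finset.sum_mul,
      Finset.sum_ite_mem, univ_inter]
    simp only [Finset.sum_const, card_univ, Fintype.card_fin, nsmul_eq_mul, Finset.sum_boole]
    have hne : (n:ℝ) + 1 ≠ 0 := by positivity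
    field_simp
    rw [← hk]; push_cast; ring
  have hCS : S^2 ≤ (k * (n+1-k)/(n+1)) * ((n+1)/n) := by
    have h1 : S^2 ≤ (∑ j, (u j)^2) * ∑ j, (t j)^2 := by
      rw [hSu]; exact Finset.sum_mul_sq_le_sq_mul_sq univ u t
    have h2 : (0:ℝ) ≤ ∑ j, (u j)^2 := Finset.sum_nonneg (fun j _ => sq_nonneg _)
    calc S^2 ≤ (∑ j, (u j)^2) * ∑ j, (t j)^2 := h1
      _ ≤ (∑ j, (u j)^2) * ((n+1)/n) := by
          apply mul_le_mul_of_nonneg_left ht2 h2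
      _ = (k * (n+1-k)/(n+1)) * ((n+1)/n) := by rw [hsumu2]
  have hnk : (n:ℝ) * k * (n + 1 - k) ≤ ((n:ℝ) - 1 + k)^2 := by
    have := nat_case_ineq n k hn1 hn4 hkle
    have hcast : ((n * k * (n + 1 - k) : ℕ) : ℝ) ≤ (((n - 1 + k)^2 : ℕ) : ℝ) := by
      exact_mod_cast this
    push_cast [Nat.cast_sub hkle, Nat.cast_sub hn1] at hcast
    convert hcast using 2 <;> push_cast <;> ring
  have hid : (k:ℝ) * ((n:ℝ)+1-k)/((n:ℝ)+1) * (((n:ℝ)+1)/n) = (n:ℝ)*k*((n:ℝ)+1-k)/(n:ℝ)^2 := by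
    field_simp
  have h3 : S^2 ≤ (n:ℝ)*k*((n:ℝ)+1-k)/(n:ℝ)^2 := hid ▸ hCS
  have hsq : ((n:ℝ)*S)^2 ≤ ((n:ℝ)-1+k)^2 := by
    calc ((n:ℝ)*S)^2 = (n:ℝ)^2*S^2 := by ring
      _ ≤ (n:ℝ)^2 * ((n:ℝ)*k*((n:ℝ)+1-k)/(n:ℝ)^2) := mul_le_mul_of_nonneg_left h3 (sq_nonneg _)
      _ = (n:ℝ)*k*((n:ℝ)+1-k) := by field_simp
      _ ≤ ((n:ℝ)-1+k)^2 := hnk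
  obtain ⟨hlow, -⟩ := abs_le_of_sq_le_sq' hsq hkR
  linarith

lemma regular_facts {n : ℕ} (hn1 : 1 ≤ n) (s : Fin (n + 1) → EuclideanSpace ℝ (Fin n))
    (hsind : AffineIndependent ℝ s)
    (hsreg : ∃ d : ℝ, ∀ i j, i ≠ j → dist (s i) (s j) = d)
    (hsins : ∀ j, ‖s j‖ = 1) :
    (∀ i j, i ≠ j → ⟪s i, s j⟫ = -1/n) ∧ ∑ j, s j = 0 := by
  classical
  obtain ⟨d, hd⟩ := hsreg
  have hnR : (0:ℝ) < n := by exact_mod_cast hn1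
  have h01 : (0 : Fin (n+1)) ≠ (1 : Fin (n+1)) := by
    apply Fin.ne_of_val_ne
    simp [Fin.val_one', Nat.mod_eq_of_lt (show 1 < n + 1 by omega)]
  have hdpos : 0 < d := by
    rw [← hd 0 1 h01]
    exact dist_pos.mpr (fun h => h01 (hsind.injective h))
  set c : ℝ := 1 - d^2/2 with hc
  have hself : ∀ i, ⟪s i, s i⟫ = 1 := by
    intro i; rw [real_inner_self_eq_norm_sq, hsins]; norm_num
  have hip : ∀ i j, i ≠ j → ⟪s i, s j⟫ = c := by
    intro i j hij
    have h := hd i j hij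
    have h2 : ‖s i - s j‖^2 = ‖s i‖^2 - 2*⟪s i, s j⟫ + ‖s j‖^2 := norm_sub_sq_real _ _
    rw [hsins, hsins] at h2
    rw [dist_eq_norm] at h
    rw [h] at h2
    rw [hc]; linarith
  have hQ : ‖∑ j, s j‖^2 = (n+1) * (1 + n * c) := by
    rw [← real_inner_self_eq_norm_sq, sum_inner]
    have : ∀ i, ⟪s i, ∑ j, s j⟫ = 1 + n * c := by
      intro i
      rw [inner_sum]
      rw [← Finset.add_sum_erase _ _ (mem_univ i), hself]
      have : ∑ j ∈ univ.erase i, ⟪s i, s j⟫ = ∑ j ∈ univ.erase i, c := by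
        apply Finset.sum_congr rfl
        intro j hj
        exact hip i j (Ne.symm (Finset.mem_erase.mp hj).1)
      rw [this, Finset.sum_const, Finset.card_erase_of_mem (mem_univ i), card_univ]
      simp [mul_comm]
    rw [Finset.sum_congr rfl (fun i _ => this i), Finset.sum_const, card_univ]
    simp
    ring
  have h1 : 0 ≤ 1 + (n:ℝ)*c := by
    nlinarith [sq_nonneg ‖∑ j, s j‖]
  have h2 : 1 + (n:ℝ)*c ≤ 0 := by
    by_contra h2'
    push_neg at h2'
    have hc1 : c < 1 := by rw [hc]; nlinarith
    have hli : LinearIndependent ℝ s := by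
      rw [Fintype.linearIndependent_iff]
      intro g hg
      by_contra hgne
      push_neg at hgne
      obtain ⟨i0, hi0⟩ := hgne
      have hpos : 0 < ∑ i, (g i)^2 :=
        Finset.sum_pos' (fun i _ => sq_nonneg _) ⟨i0, mem_univ i0, by positivity⟩
      have hzero : (0:ℝ) = ∑ i, ∑ j, g i * g j * ⟪s i, s j⟫ := by
        have : ⟪∑ i, g i • s i, ∑ j, g j • s j⟫ = (0:ℝ) := by rw [hg]; simp
        rw [← this, sum_inner]
        apply Finset.sum_congr rfl
        intro i _
        rw [real_inner_smul_left, inner_sum, Finset.mul_sum]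
        apply Finset.sum_congr rfl
        intro j _
        rw [real_inner_smul_right]
        ring
      have hexp : ∑ i, ∑ j, g i * g j * ⟪s i, s j⟫
          = (1-c) * (∑ i, (g i)^2) + c * (∑ i, g i)^2 := by
        have he : ∀ i j, g i * g j * ⟪s i, s j⟫
            = c * (g i * g j) + (if j = i then (1-c) * (g i)^2 else 0) := by
          intro i j
          by_cases h : j = i
          · subst h
            rw [hself, if_pos rfl]
            ring
          · rw [hip i j (Ne.symm h), if_neg h]
            ring
        calc ∑ i, ∑ j, g i * g j * ⟪s i, s j⟫
            = ∑ i, ((c * g i) * (∑ j, g j) + (1-c) * (g i)^2) := by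
              apply Finset.sum_congr rfl
              intro i _
              rw [Finset.sum_congr rfl (fun j _ => he i j), Finset.sum_add_distrib,
                Finset.sum_ite_eq' univ i]
              have h3 : ∀ j, c * (g i * g j) = (c * g i) * g j := fun j => by ring
              rw [Finset.sum_congr rfl (fun j _ => h3 j), ← Finset.mul_sum]
              simp
          _ = (1-c) * (∑ i, (g i)^2) + c * (∑ i, g i)^2 := by
              rw [Finset.sum_add_distrib, ← Finset.sum_mul, ← Finset.mul_sum, ← Finset.mul_sum]
              ring
      have hcauchy : (∑ i, g i)^2 ≤ (n+1) * ∑ i, (g i)^2 := by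
        have := Finset.sum_mul_sq_le_sq_mul_sq univ (fun _ => (1:ℝ)) g
        simpa using this
      rcases le_or_gt c 0 with hcs | hcs
      · nlinarith [mul_nonneg (neg_nonneg.2 hcs) (sub_nonneg.2 hcauchy)]
      · nlinarith [mul_nonneg hcs.le (sq_nonneg (∑ i, g i))]
    have hcard := hli.fintype_card_le_finrank
    rw [finrank_euclideanSpace_fin] at hcard
    simp at hcard
  have hcval : c = -1/n := by
    have : 1 + (n:ℝ)*c = 0 := le_antisymm h2 h1
    field_simp
    linarith
  constructor
  · intro i j hij; rw [hip i j hij, hcval]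
  · have hz : ‖∑ j, s j‖^2 = 0 := by
      rw [hQ, le_antisymm h2 h1, mul_zero]
    exact norm_eq_zero.mp (pow_eq_zero_iff two_ne_zero |>.mp hz)

lemma span_top_of_regular {n : ℕ} (hn1 : 1 ≤ n) (s : Fin (n + 1) → EuclideanSpace ℝ (Fin n))
    (hsind : AffineIndependent ℝ s) :
    Submodule.span ℝ (Set.range s) = ⊤ := by
  classical
  have hli := (affineIndependent_iff_linearIndependent_vsub ℝ s 0).mp hsind
  have hcard : Fintype.card {x : Fin (n+1) // x ≠ 0} = Module.finrank ℝ (EuclideanSpace ℝ (Fin n)) := by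
    rw [finrank_euclideanSpace_fin]
    simp [Ne, Fintype.card_subtype_compl, Fintype.card_subtype_eq]
  have hne : Nonempty {x : Fin (n+1) // x ≠ 0} := by
    refine ⟨⟨1, ?_⟩⟩
    apply Fin.ne_of_val_ne
    simp [Fin.val_one', Nat.mod_eq_of_lt (show 1 < n + 1 by omega)]
  have hspan := hli.span_eq_top_of_card_eq_finrank hcard
  rw [eq_top_iff, ← hspan]
  apply Submodule.span_le.mpr
  rintro v ⟨j, rfl⟩
  simp only [vsub_eq_sub]
  exact sub_mem (Submodule.subset_span ⟨(j:Fin (n+1)), rfl⟩) (Submodule.subset_span ⟨0, rfl⟩)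

lemma frame_identity {n : ℕ} (hn1 : 1 ≤ n) (s : Fin (n + 1) → EuclideanSpace ℝ (Fin n))
    (hsind : AffineIndependent ℝ s)
    (hself : ∀ i, ⟪s i, s i⟫ = 1)
    (hip : ∀ i j, i ≠ j → ⟪s i, s j⟫ = -1/n)
    (hsum0 : ∑ j, s j = 0) (z : EuclideanSpace ℝ (Fin n)) :
    ∑ j, ⟪s j, z⟫^2 = ((n+1)/n) * ‖z‖^2 := by
  classical
  have hnR : (0:ℝ) < n := by exact_mod_cast hn1
  set T : EuclideanSpace ℝ (Fin n) →ₗ[ℝ] EuclideanSpace ℝ (Fin n) :=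
    ∑ j, LinearMap.smulRight (innerₗ (EuclideanSpace ℝ (Fin n)) (s j)) (s j) with hT
  have hTapp : ∀ w, T w = ∑ j, ⟪s j, w⟫ • s j := by
    intro w
    rw [hT, LinearMap.sum_apply]
    simp [LinearMap.smulRight_apply]
  have hTid : T = ((n+1:ℝ)/n) • LinearMap.id := by
    apply LinearMap.ext_on (span_top_of_regular hn1 s hsind)
    rintro v ⟨i, rfl⟩
    rw [hTapp]
    have he : ∀ j, ⟪s j, s i⟫ • s j
        = (-1/(n:ℝ)) • s j + (if j = i then (((n:ℝ)+1)/n) • s i else 0) := by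
      intro j
      by_cases h : j = i
      · subst h
        rw [hself, if_pos rfl, ← add_smul]
        have : (1:ℝ) = -1/(n:ℝ) + ((n:ℝ)+1)/n := by field_simp; ring
        rw [← this]
      · rw [hip j i h, if_neg h, add_zero]
    rw [Finset.sum_congr rfl (fun j _ => he j), Finset.sum_add_distrib, ← Finset.smul_sum,
      hsum0, smul_zero, zero_add, Finset.sum_ite_eq' univ i (fun j => (((n:ℝ)+1)/n) • s i)]
    simp
  have hvec : ∑ j, ⟪s j, z⟫ • s j = (((n:ℝ)+1)/n) • z := by
    rw [← hTapp, hTid]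
    simp
  calc ∑ j, ⟪s j, z⟫^2 = ⟪∑ j, ⟪s j, z⟫ • s j, z⟫ := by
        rw [sum_inner]
        apply Finset.sum_congr rfl
        intro j _
        rw [real_inner_smul_left]
        ring
    _ = (((n:ℝ)+1)/n) * ‖z‖^2 := by
        rw [hvec, real_inner_smul_left, real_inner_self_eq_norm_sq]

lemma lagrange_formula_regular {n : ℕ} (hn1 : 1 ≤ n)
    (s : Fin (n + 1) → EuclideanSpace ℝ (Fin n))
    (hsind : AffineIndependent ℝ s)
    (hself : ∀ i, ⟪s i, s i⟫ = 1)
    (hip : ∀ i j, i ≠ j → ⟪s i, s j⟫ = -1/n)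
    (f : EuclideanSpace ℝ (Fin n) →ᵃ[ℝ] ℝ) (j : Fin (n+1))
    (hf : ∀ i, f (s i) = if i = j then 1 else 0) (q : EuclideanSpace ℝ (Fin n)) :
    f q = (1 + n * ⟪s j, q⟫)/(n+1) := by
  have hnR : (0:ℝ) < n := by exact_mod_cast hn1
  have htot : affineSpan ℝ (Set.range s) = ⊤ :=
    hsind.affineSpan_eq_top_iff_card_eq_finrank_add_one.mpr
      (by simp [finrank_euclideanSpace_fin])
  let bs : AffineBasis (Fin (n+1)) ℝ (EuclideanSpace ℝ (Fin n)) := ⟨s, hsind, htot⟩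
  set M : EuclideanSpace ℝ (Fin n) →ᵃ[ℝ] ℝ :=
    { toFun := fun z => (1 + n * ⟪s j, z⟫)/(n+1)
      linear := ((n:ℝ)/(n+1)) • innerₗ (EuclideanSpace ℝ (Fin n)) (s j)
      map_vadd' := by
        intro p v
        simp only [vadd_eq_add, LinearMap.smul_apply, innerₗ_apply_apply, smul_eq_mul]
        rw [inner_add_right]
        field_simp
        ring } with hM
  have h1 := eq_coord bs f j hf q
  have h2 := eq_coord bs M j ?_ q
  · rw [h1, ← h2]
    rfl
  · intro i
    by_cases h : i = j
    · subst h
      show (1 + (n:ℝ) * ⟪s i, s i⟫)/(n+1) = _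
      rw [hself, if_pos rfl]
      field_simp
      ring
    · show (1 + (n:ℝ) * ⟪s j, s i⟫)/(n+1) = _
      rw [hip j i (Ne.symm h), if_neg h]
      field_simp
      ring

end Helpers

/-- `lam` is the family of basic Lagrange polynomials (barycentric coordinates)
of the simplex with vertices `x`. -/
def IsLagrangeBasis {n : ℕ} (x : Fin (n + 1) → EuclideanSpace ℝ (Fin n))
    (lam : Fin (n + 1) → EuclideanSpace ℝ (Fin n) → ℝ) : Prop :=
  ∀ j, (∃ L : EuclideanSpace ℝ (Fin n) →ᵃ[ℝ] ℝ, lam j = ⇑L) ∧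
    ∀ i, lam j (x i) = if i = j then 1 else 0

theorem regular_simplex_minimizes_norm_low_dim
    {n : ℕ} (hn1 : 1 ≤ n) (hn4 : n ≤ 4)
    (x : Fin (n + 1) → EuclideanSpace ℝ (Fin n))
    (hind : AffineIndependent ℝ x)
    (hxB : ∀ j, x j ∈ Metric.closedBall (0 : EuclideanSpace ℝ (Fin n)) 1)
    (lam : Fin (n + 1) → EuclideanSpace ℝ (Fin n) → ℝ)
    (hlam : IsLagrangeBasis x lam)
    (s : Fin (n + 1) → EuclideanSpace ℝ (Fin n))
    (hsind : AffineIndependent ℝ s)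
    (hsreg : ∃ d : ℝ, ∀ i j, i ≠ j → dist (s i) (s j) = d)
    (hsins : ∀ j, ‖s j‖ = 1)
    (lam' : Fin (n + 1) → EuclideanSpace ℝ (Fin n) → ℝ)
    (hlam' : IsLagrangeBasis s lam') :
    sSup ((fun z => ∑ j, |lam j z|) ''
        Metric.closedBall (0 : EuclideanSpace ℝ (Fin n)) 1) ≥
      sSup ((fun z => ∑ j, |lam' j z|) ''
        Metric.closedBall (0 : EuclideanSpace ℝ (Fin n)) 1) := by
  classical
  have hnR : (0:ℝ) < n := by exact_mod_cast hn1
  have hn1R : (1:ℝ) ≤ n := by exact_mod_cast hn1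
  set K : ℝ := (3*(n:ℝ) - 1)/((n:ℝ)+1) with hK
  have hK0 : 0 ≤ K := by
    apply div_nonneg <;> linarith
  -- the regular simplex structure
  obtain ⟨hipm, hsum0⟩ := regular_facts hn1 s hsind hsreg hsins
  have hself : ∀ i, ⟪s i, s i⟫ = 1 := by
    intro i; rw [real_inner_self_eq_norm_sq, hsins]; norm_num
  have hform : ∀ j z, lam' j z = (1 + n * ⟪s j, z⟫)/(n+1) := by
    intro j z
    obtain ⟨L', hL'⟩ := (hlam' j).1
    rw [hL']
    exact lagrange_formula_regular hn1 s hsind hself hipm L' j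
      (fun i => by rw [← hL']; exact (hlam' j).2 i) z
  -- RHS is bounded by K
  have hRHS : sSup ((fun z => ∑ j, |lam' j z|) ''
      Metric.closedBall (0 : EuclideanSpace ℝ (Fin n)) 1) ≤ K := by
    apply Real.sSup_le _ hK0
    rintro y ⟨z, hz, rfl⟩
    rw [Metric.mem_closedBall, dist_zero_right] at hz
    have ht0 : ∑ j, ⟪s j, z⟫ = 0 := by
      rw [← sum_inner, hsum0, inner_zero_left]
    have ht2 : ∑ j, ⟪s j, z⟫^2 ≤ ((n:ℝ)+1)/n := by
      rw [frame_identity hn1 s hsind hself hipm hsum0 z]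
      have hz2 : ‖z‖^2 ≤ 1 := by nlinarith [norm_nonneg z]
      calc (((n:ℝ)+1)/n) * ‖z‖^2 ≤ (((n:ℝ)+1)/n) * 1 :=
            mul_le_mul_of_nonneg_left hz2 (by positivity)
        _ = ((n:ℝ)+1)/n := mul_one _
    have hkey := key_ineq hn1 hn4 (fun j => ⟪s j, z⟫) ht0 ht2
    calc ∑ j, |lam' j z| = ∑ j, |1 + (n:ℝ) * ⟪s j, z⟫| / ((n:ℝ)+1) := by
          apply Finset.sum_congr rfl
          intro j _
          rw [hform j z, abs_div, abs_of_pos (show (0:ℝ) < (n:ℝ)+1 by positivity)]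
      _ = (∑ j, |1 + (n:ℝ) * ⟪s j, z⟫|) / ((n:ℝ)+1) := by rw [Finset.sum_div]
      _ ≤ K := by
          rw [hK]
          exact (div_le_div_iff_of_pos_right (show (0:ℝ) < (n:ℝ)+1 by positivity)).mpr hkey
  -- LHS part
  choose L hL using fun j => (hlam j).1
  have hval : ∀ j i, lam j (x i) = if i = j then 1 else 0 := fun j => (hlam j).2
  have hxtot : affineSpan ℝ (Set.range x) = ⊤ :=
    hind.affineSpan_eq_top_iff_card_eq_finrank_add_one.mpr
      (by simp [finrank_euclideanSpace_fin])
  let bx : AffineBasis (Fin (n+1)) ℝ (EuclideanSpace ℝ (Fin n)) := ⟨x, hind, hxtot⟩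
  have hsum : ∀ z, ∑ j, lam j z = 1 := by
    intro z
    have h : ∀ j, lam j z = bx.coord j z := fun j => by
      rw [hL j]
      exact eq_coord bx (L j) j (fun i => by rw [← hL j]; exact hval j i) z
    rw [Finset.sum_congr rfl (fun j _ => h j)]
    exact bx.sum_coord_apply_eq_one z
  set v : Fin (n+1) → EuclideanSpace ℝ (Fin n) :=
    fun j => (InnerProductSpace.toDual ℝ (EuclideanSpace ℝ (Fin n))).symm
      (LinearMap.toContinuousLinearMap (L j).linear) with hv
  have hrep : ∀ j z, lam j z = ⟪v j, z⟫ + lam j 0 := by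
    intro j z
    have h1 : ⟪v j, z⟫ = (L j).linear z := by
      rw [hv, InnerProductSpace.toDual_symm_apply]
      exact congrFun (LinearMap.coe_toContinuousLinearMap' (L j).linear) z
    have h2 : (L j) z = (L j).linear z + (L j) 0 := by
      conv_lhs => rw [show z = z +ᵥ (0:EuclideanSpace ℝ (Fin n)) by simp]
      rw [AffineMap.map_vadd, vadd_eq_add]
    rw [hL j, h2, h1]
  have hnormx : ∀ j, ‖x j‖ ≤ 1 := fun j => by
    have := hxB j
    rwa [Metric.mem_closedBall, dist_zero_right] at this
  have hineq : ∀ j, 1 - lam j 0 ≤ ‖v j‖ := by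
    intro j
    have h := hval j j
    rw [if_pos rfl] at h
    have he : (1:ℝ) = ⟪v j, x j⟫ + lam j 0 := by rw [← hrep j (x j), h]
    have hcs : ⟪v j, x j⟫ ≤ ‖v j‖ := by
      calc ⟪v j, x j⟫ ≤ ‖v j‖ * ‖x j‖ := real_inner_le_norm _ _
        _ ≤ ‖v j‖ * 1 := mul_le_mul_of_nonneg_left (hnormx j) (norm_nonneg _)
        _ = ‖v j‖ := mul_one _
    linarith
  have hb1 : ∑ j, lam j 0 = 1 := hsum 0
  obtain ⟨j0, -, hj0⟩ : ∃ j ∈ univ, ((n:ℝ)-1)/((n:ℝ)+1) ≤ ‖v j‖ - lam j 0 := by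
    apply Finset.exists_le_of_sum_le univ_nonempty
    have h1 : ∑ _j : Fin (n+1), (((n:ℝ)-1)/((n:ℝ)+1)) = (n:ℝ)-1 := by
      rw [Finset.sum_const, card_univ, Fintype.card_fin, nsmul_eq_mul]
      push_cast
      field_simp
    have h2 : ∑ j, (1 - lam j 0) ≤ ∑ j, ‖v j‖ :=
      Finset.sum_le_sum (fun j _ => hineq j)
    rw [Finset.sum_sub_distrib, hb1] at h2
    simp only [Finset.sum_const, card_univ, Fintype.card_fin, nsmul_eq_mul, mul_one] at h2
    rw [h1, Finset.sum_sub_distrib, hb1]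
    push_cast at h2
    linarith
  have hvne : v j0 ≠ 0 := by
    intro h0
    have hnt : Nontrivial (Fin (n+1)) := Fin.nontrivial_iff_two_le.mpr (by omega)
    obtain ⟨i, hi⟩ := exists_ne j0
    have e1 : lam j0 (x j0) = 1 := by rw [hval j0 j0, if_pos rfl]
    have e2 : lam j0 (x i) = 0 := by rw [hval j0 i, if_neg hi]
    rw [hrep j0 (x j0), h0, inner_zero_left] at e1
    rw [hrep j0 (x i), h0, inner_zero_left] at e2
    linarith
  have hvpos : 0 < ‖v j0‖ := norm_pos_iff.mpr hvne
  set xstar : EuclideanSpace ℝ (Fin n) := -(‖v j0‖⁻¹) • v j0 with hxs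
  have hxsmem : xstar ∈ Metric.closedBall (0 : EuclideanSpace ℝ (Fin n)) 1 := by
    rw [Metric.mem_closedBall, dist_zero_right, hxs, norm_smul, norm_neg, norm_inv,
      norm_norm, inv_mul_cancel₀ (ne_of_gt hvpos)]
  have hts : lam j0 xstar = lam j0 0 - ‖v j0‖ := by
    rw [hrep j0 xstar, hxs, real_inner_smul_right, real_inner_self_eq_norm_sq]
    have h0 : ‖v j0‖ ≠ 0 := ne_of_gt hvpos
    field_simp
    ring
  have hnonpos : lam j0 xstar ≤ 0 := by
    rw [hts]
    have h1 : (0:ℝ) ≤ ((n:ℝ)-1)/((n:ℝ)+1) := by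
      apply div_nonneg <;> linarith
    linarith
  have hrest : ∑ j ∈ univ.erase j0, lam j xstar = 1 - lam j0 xstar := by
    have h := hsum xstar
    rw [← Finset.add_sum_erase univ (fun j => lam j xstar) (mem_univ j0)] at h
    linarith
  have habs2 : 1 - lam j0 xstar ≤ ∑ j ∈ univ.erase j0, |lam j xstar| := by
    calc 1 - lam j0 xstar = ∑ j ∈ univ.erase j0, lam j xstar := hrest.symm
      _ ≤ |∑ j ∈ univ.erase j0, lam j xstar| := le_abs_self _
      _ ≤ ∑ j ∈ univ.erase j0, |lam j xstar| := Finset.abs_sum_le_sum_abs _ _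
  have hKle : K ≤ ∑ j, |lam j xstar| := by
    rw [← Finset.add_sum_erase univ (fun j => |lam j xstar|) (mem_univ j0)]
    have habs1 : |lam j0 xstar| = -(lam j0 xstar) := abs_of_nonpos hnonpos
    have hKval : K ≤ 1 - 2 * lam j0 xstar := by
      rw [hK, hts]
      rw [div_le_iff₀ (show (0:ℝ) < (n:ℝ)+1 by positivity)]
      have h2 : (n:ℝ)-1 ≤ (‖v j0‖ - lam j0 0) * ((n:ℝ)+1) := by
        rw [← div_le_iff₀ (show (0:ℝ) < (n:ℝ)+1 by positivity)]
        exact hj0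
      nlinarith
    linarith [habs2]
  -- conclude via sSup
  have hcont : Continuous (fun z => ∑ j, |lam j z|) := by
    apply continuous_finset_sum
    intro j _
    have h : Continuous (lam j) := by
      rw [hL j]
      exact (L j).continuous_of_finiteDimensional
    exact h.abs
  have hbdd : BddAbove ((fun z => ∑ j, |lam j z|) ''
      Metric.closedBall (0 : EuclideanSpace ℝ (Fin n)) 1) :=
    ((isCompact_closedBall (0 : EuclideanSpace ℝ (Fin n)) 1).image hcont).bddAbove
  have hLHS : K ≤ sSup ((fun z => ∑ j, |lam j z|) ''
      Metric.closedBall (0 : EuclideanSpace ℝ (Fin n)) 1) := by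
    refine le_trans hKle (le_csSup hbdd ?_)
    exact ⟨xstar, hxsmem, rfl⟩
  exact le_trans hRHS hLHS
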